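/- Let f : E → ℝ be differentiable with ℓ_{∇f}-Lipschitz gradient, and define ψ(x) = f(x) + M_h^{1/σ}(A x − z/σ). Then the gradient map x ↦ ∇f(x) + σ·A*(A x − z/σ − p(x)) of ψ, where p(x) is the proximal point of h at A x − z/σ with parameter 1/σ, is Lipschitz continuous with constant ℓ_{∇f} + σ‖A‖², where ‖A‖ is the operator norm of A. -/
import Mathlib


open scoped NNReal RealInnerProductSpace

lemma prox_diff_nonexpansive {F : Type*} [NormedAddCommGroup F] [InnerProductSpace ℝ F]
    (u₁ u₂ p₁ p₂ : F)
    (hS : ‖p₁ - u₁‖ ^ 2 + ‖p₂ - u₂‖ ^ 2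
        ≤ ‖(2:ℝ)⁻¹ • (p₁ + p₂) - u₁‖ ^ 2 + ‖(2:ℝ)⁻¹ • (p₁ + p₂) - u₂‖ ^ 2) :
    ‖(u₁ - p₁) - (u₂ - p₂)‖ ≤ ‖u₁ - u₂‖ := by
  have key : ‖(u₁ - p₁) - (u₂ - p₂)‖ ^ 2 ≤ ‖u₁ - u₂‖ ^ 2 := by
    have e : ∀ v : F, ‖v‖ ^ 2 = ⟪v, v⟫ := fun v => (real_inner_self_eq_norm_sq v).symm
    simp only [e] at hS ⊢
    simp only [inner_sub_left, inner_sub_right, inner_add_left, inner_add_right,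
      inner_smul_left, inner_smul_right, RCLike.conj_to_real] at hS ⊢
    nlinarith [real_inner_comm u₁ p₁, real_inner_comm u₂ p₂, real_inner_comm u₁ p₂,
      real_inner_comm u₂ p₁, real_inner_comm u₁ u₂, real_inner_comm p₁ p₂]
  nlinarith [norm_nonneg ((u₁ - p₁) - (u₂ - p₂)), norm_nonneg (u₁ - u₂)]

/-- The gradient map of the augmented Lagrangian `ψ(x) = f(x) + M_h^{1/σ}(Ax - z/σ)`,
namely `x ↦ ∇f(x) + σ A*(Ax - z/σ - p(x))`, is Lipschitz with constant `ℓ_{∇f} + σ‖A‖²`. -/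
theorem augmented_lagrangian_gradient_lipschitz
    {E F : Type*} [NormedAddCommGroup E] [InnerProductSpace ℝ E] [FiniteDimensional ℝ E]
    [NormedAddCommGroup F] [InnerProductSpace ℝ F] [FiniteDimensional ℝ F]
    (A : E →L[ℝ] F) (h : F → ℝ) (ℓh : ℝ≥0)
    (hconv : ConvexOn ℝ Set.univ h) (hlip : LipschitzWith ℓh h)
    (σ : ℝ) (hσ : 0 < σ) (z : F)
    (p : E → F)
    (hp : ∀ x : E, ∀ w : F,
      h (p x) + (σ / 2) * ‖p x - (A x - σ⁻¹ • z)‖ ^ 2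
        ≤ h w + (σ / 2) * ‖w - (A x - σ⁻¹ • z)‖ ^ 2)
    (f : E → ℝ) (f' : E → E) (hf : ∀ x : E, HasGradientAt f (f' x) x)
    (ℓf : ℝ) (hflip : ∀ x₁ x₂ : E, ‖f' x₁ - f' x₂‖ ≤ ℓf * ‖x₁ - x₂‖) :
    ∀ x₁ x₂ : E,
      ‖(f' x₁ + σ • (ContinuousLinearMap.adjoint A) (A x₁ - σ⁻¹ • z - p x₁)) -
          (f' x₂ + σ • (ContinuousLinearMap.adjoint A) (A x₂ - σ⁻¹ • z - p x₂))‖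
        ≤ (ℓf + σ * ‖A‖ ^ 2) * ‖x₁ - x₂‖ := by
  intro x₁ x₂
  set u₁ := A x₁ - σ⁻¹ • z with hu₁
  set u₂ := A x₂ - σ⁻¹ • z with hu₂
  set m := (2:ℝ)⁻¹ • (p x₁ + p x₂) with hm
  -- convexity at midpoint
  have hcm : h m ≤ (2:ℝ)⁻¹ * h (p x₁) + (2:ℝ)⁻¹ * h (p x₂) := by
    have := hconv.2 (Set.mem_univ (p x₁)) (Set.mem_univ (p x₂))
      (by norm_num : (0:ℝ) ≤ (2:ℝ)⁻¹) (by norm_num : (0:ℝ) ≤ (2:ℝ)⁻¹) (by norm_num)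
    simpa [hm, smul_add] using this
  have H1 := hp x₁ m
  have H2 := hp x₂ m
  have hS : ‖p x₁ - u₁‖ ^ 2 + ‖p x₂ - u₂‖ ^ 2 ≤ ‖m - u₁‖ ^ 2 + ‖m - u₂‖ ^ 2 := by
    have hσ2 : 0 < σ / 2 := by linarith
    nlinarith [H1, H2, hcm]
  have hne : ‖(u₁ - p x₁) - (u₂ - p x₂)‖ ≤ ‖u₁ - u₂‖ :=
    prox_diff_nonexpansive u₁ u₂ (p x₁) (p x₂) hS
  have hu : u₁ - u₂ = A (x₁ - x₂) := by
    simp only [hu₁, hu₂, map_sub]; abel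
  have hAu : ‖u₁ - u₂‖ ≤ ‖A‖ * ‖x₁ - x₂‖ := by
    rw [hu]; exact A.le_opNorm _
  have heq : (f' x₁ + σ • (ContinuousLinearMap.adjoint A) (u₁ - p x₁)) -
          (f' x₂ + σ • (ContinuousLinearMap.adjoint A) (u₂ - p x₂))
      = (f' x₁ - f' x₂) + σ • (ContinuousLinearMap.adjoint A) ((u₁ - p x₁) - (u₂ - p x₂)) := by
    simp only [map_sub, smul_sub]; abel
  rw [heq]
  calc ‖(f' x₁ - f' x₂) + σ • (ContinuousLinearMap.adjoint A) ((u₁ - p x₁) - (u₂ - p x₂))‖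
      ≤ ‖f' x₁ - f' x₂‖ + ‖σ • (ContinuousLinearMap.adjoint A) ((u₁ - p x₁) - (u₂ - p x₂))‖ :=
        norm_add_le _ _
    _ ≤ ℓf * ‖x₁ - x₂‖ + σ * (‖A‖ * ‖u₁ - u₂‖) := by
        refine add_le_add (hflip x₁ x₂) ?_
        rw [norm_smul, Real.norm_eq_abs, abs_of_pos hσ]
        refine mul_le_mul_of_nonneg_left ?_ hσ.le
        calc ‖(ContinuousLinearMap.adjoint A) ((u₁ - p x₁) - (u₂ - p x₂))‖
            ≤ ‖ContinuousLinearMap.adjoint A‖ * ‖(u₁ - p x₁) - (u₂ - p x₂)‖ :=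
              (ContinuousLinearMap.adjoint A).le_opNorm _
          _ ≤ ‖A‖ * ‖u₁ - u₂‖ := by
              rw [show ‖ContinuousLinearMap.adjoint A‖ = ‖A‖ from
                LinearIsometryEquiv.norm_map ContinuousLinearMap.adjoint A]
              exact mul_le_mul_of_nonneg_left hne (norm_nonneg A)
    _ ≤ (ℓf + σ * ‖A‖ ^ 2) * ‖x₁ - x₂‖ := by
        have := mul_le_mul_of_nonneg_left hAu (mul_nonneg hσ.le (norm_nonneg A))
        nlinarith [norm_nonneg (x₁ - x₂)]
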